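/- arXiv:2403.02657 — 5 statements merged into one kernel-verified Lean document; each statement's English description precedes it below -/
import Mathlib

section
/- Let α ∈ (0,1) be a real number and n ∈ ℤ. There exists a constant C > 0 (depending on α and n) such that for all complex numbers z and w one has | |z|^{α−n} z^n − |w|^{α−n} w^n | ≤ C |z − w|^α; i.e., the map z ↦ |z|^{α−n} z^n is Hölder continuous of order α on ℂ. -/
open Complex

/-- Real version of `(x+y)^α ≤ x^α + y^α` for `0 ≤ α ≤ 1`. -/
private lemma real_rpow_add_le {α : ℝ} (hα0 : 0 ≤ α) (hα1 : α ≤ 1) {x y : ℝ}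
    (hx : 0 ≤ x) (hy : 0 ≤ y) : (x + y) ^ α ≤ x ^ α + y ^ α := by
  have h := NNReal.rpow_add_le_add_rpow x.toNNReal y.toNNReal hα0 hα1
  rw [← Real.coe_toNNReal x hx, ← Real.coe_toNNReal y hy]
  exact_mod_cast h

/-- `a^α - b^α ≤ (a-b)^α` for `0 ≤ b ≤ a`, `0 ≤ α ≤ 1`. -/
private lemma rpow_sub_rpow_le {α : ℝ} (hα0 : 0 ≤ α) (hα1 : α ≤ 1) {a b : ℝ}
    (hb : 0 ≤ b) (hba : b ≤ a) : a ^ α - b ^ α ≤ (a - b) ^ α := by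
  have h : a ^ α ≤ (a - b) ^ α + b ^ α := by
    have := real_rpow_add_le hα0 hα1 (sub_nonneg.2 hba) hb
    rwa [sub_add_cancel] at this
  linarith

/-- Difference of natural powers of unit complex numbers. -/
private lemma unit_pow_sub_pow (u v : ℂ) (hu : ‖u‖ = 1) (hv : ‖v‖ = 1)
    (k : ℕ) : ‖u ^ k - v ^ k‖ ≤ k * ‖u - v‖ := by
  induction k with
  | zero => simp
  | succ k ih =>
    have hsplit : u ^ (k + 1) - v ^ (k + 1) = u * (u ^ k - v ^ k) + (u - v) * v ^ k := by
      ring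
    calc ‖u ^ (k + 1) - v ^ (k + 1)‖
        ≤ ‖u * (u ^ k - v ^ k)‖ + ‖(u - v) * v ^ k‖ := by
          rw [hsplit]; exact norm_add_le _ _
      _ = ‖u ^ k - v ^ k‖ + ‖u - v‖ := by
          rw [norm_mul, norm_mul, hu, norm_pow, hv, one_pow, one_mul, mul_one]
      _ ≤ k * ‖u - v‖ + ‖u - v‖ := by linarith
      _ = (k + 1 : ℕ) * ‖u - v‖ := by push_cast; ring

/-- Difference of integer powers of unit complex numbers. -/
private lemma unit_zpow_sub_zpow (u v : ℂ) (hu : ‖u‖ = 1) (hv : ‖v‖ = 1)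
    (n : ℤ) : ‖u ^ n - v ^ n‖ ≤ (n.natAbs : ℝ) * ‖u - v‖ := by
  obtain ⟨k, hk | hk⟩ := Int.eq_nat_or_neg n
  · subst hk
    rw [zpow_natCast, zpow_natCast, Int.natAbs_natCast]
    exact unit_pow_sub_pow u v hu hv k
  · subst hk
    have hinv : ∀ a : ℂ, ‖a‖ = 1 → a⁻¹ = (starRingEnd ℂ) a := by
      intro a ha
      rw [Complex.inv_def, Complex.normSq_eq_norm_sq, ha]
      simp
    have hupow : ‖u ^ k‖ = 1 := by rw [norm_pow, hu, one_pow]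
    have hvpow : ‖v ^ k‖ = 1 := by rw [norm_pow, hv, one_pow]
    rw [Int.natAbs_neg, Int.natAbs_natCast, zpow_neg, zpow_neg, zpow_natCast, zpow_natCast,
      hinv _ hupow, hinv _ hvpow, ← map_sub, Complex.norm_conj]
    exact unit_pow_sub_pow u v hu hv k

/-- `α - n ≠ 0` when `0 < α < 1`. -/
private lemma exp_ne_zero {α : ℝ} (hα0 : 0 < α) (hα1 : α < 1) (n : ℤ) : α - (n : ℝ) ≠ 0 := by
  intro h
  have hn : (n : ℝ) = α := by linarith
  rcases le_or_gt n 0 with h0 | h0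
  · have : (n : ℝ) ≤ 0 := by exact_mod_cast h0
    linarith
  · have h1 : (1 : ℤ) ≤ n := h0
    have : (1 : ℝ) ≤ (n : ℝ) := by exact_mod_cast h1
    linarith

/-- The modulus of the nonlinearity: `|f(z)| = |z|^α`. -/
private lemma abs_nonlin {α : ℝ} (hα0 : 0 < α) (hα1 : α < 1) (n : ℤ) (z : ℂ) :
    ‖((‖z‖ ^ (α - (n : ℝ)) : ℝ) : ℂ) * z ^ n‖
      = ‖z‖ ^ α := by
  rcases eq_or_ne z 0 with rfl | hz
  · rw [norm_zero, Real.zero_rpow (exp_ne_zero hα0 hα1 n),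
      Real.zero_rpow hα0.ne']
    simp
  · have hr : 0 < ‖z‖ := norm_pos_iff.mpr hz
    rw [norm_mul, Complex.norm_real, Real.norm_eq_abs, _root_.abs_of_nonneg (Real.rpow_nonneg hr.le _),
      norm_zpow]
    rw [show (‖z‖) ^ n = (‖z‖) ^ ((n : ℝ)) from
      (Real.rpow_intCast _ n).symm, ← Real.rpow_add hr, sub_add_cancel]

/-- Key estimate under the assumption `|w| ≤ |z|`. -/
private lemma key_estimate {α : ℝ} (hα0 : 0 < α) (hα1 : α < 1) (n : ℤ) (z w : ℂ)
    (hwz : ‖w‖ ≤ ‖z‖) :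
    ‖((‖z‖ ^ (α - (n : ℝ)) : ℝ) : ℂ) * z ^ n
        - ((‖w‖ ^ (α - (n : ℝ)) : ℝ) : ℂ) * w ^ n‖
      ≤ (2 * (n.natAbs : ℝ) + 4) * ‖z - w‖ ^ α := by
  set r := ‖z‖ with hr_def
  set s := ‖w‖ with hs_def
  set d := ‖z - w‖ with hd_def
  have hk0 : (0 : ℝ) ≤ (n.natAbs : ℝ) := Nat.cast_nonneg _
  rcases eq_or_ne z w with rfl | hzw
  · simp only [hr_def, hs_def, sub_self, norm_zero]
    have hd0 : d = 0 := by simp [hd_def]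
    rw [hd0, Real.zero_rpow hα0.ne']
    simp
  have hd : 0 < d := norm_pos_iff.mpr (sub_ne_zero.2 hzw)
  have hs0 : 0 ≤ s := norm_nonneg w
  have hr0 : 0 ≤ r := norm_nonneg z
  have hdα : 0 < d ^ α := Real.rpow_pos_of_pos hd α
  by_cases hcase : r ≤ 2 * d
  · -- far case: crude bound
    calc ‖((r ^ (α - (n : ℝ)) : ℝ) : ℂ) * z ^ n
            - ((s ^ (α - (n : ℝ)) : ℝ) : ℂ) * w ^ n‖
        ≤ ‖((r ^ (α - (n : ℝ)) : ℝ) : ℂ) * z ^ n‖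
            + ‖((s ^ (α - (n : ℝ)) : ℝ) : ℂ) * w ^ n‖ := by
          exact norm_sub_le _ _
      _ = r ^ α + s ^ α := by
          rw [abs_nonlin hα0 hα1 n z, abs_nonlin hα0 hα1 n w]
      _ ≤ 2 * r ^ α := by
          have : s ^ α ≤ r ^ α := Real.rpow_le_rpow hs0 hwz hα0.le
          linarith
      _ ≤ 2 * (2 * d) ^ α := by
          have : r ^ α ≤ (2 * d) ^ α := Real.rpow_le_rpow hr0 hcase hα0.le
          linarith
      _ = 2 * (2 ^ α * d ^ α) := by
          rw [Real.mul_rpow (by norm_num) hd.le]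
      _ ≤ 4 * d ^ α := by
          have h2 : (2 : ℝ) ^ α ≤ 2 ^ (1 : ℝ) :=
            Real.rpow_le_rpow_of_exponent_le (by norm_num) hα1.le
          rw [Real.rpow_one] at h2
          nlinarith
      _ ≤ (2 * (n.natAbs : ℝ) + 4) * d ^ α := by nlinarith
  · -- near case
    push_neg at hcase
    have hr : 0 < r := lt_trans (by linarith) hcase
    have hrs : |r - s| ≤ d := by
      have := abs_norm_sub_norm_le z w
      simpa [hr_def, hs_def, hd_def] using this
    have hs : 0 < s := by
      have : r - s ≤ d := (le_abs_self _).trans hrs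
      linarith
    have hz0 : z ≠ 0 := by
      intro h; rw [h, norm_zero] at hr_def; exact hr.ne' hr_def
    have hw0 : w ≠ 0 := by
      intro h; rw [h, norm_zero] at hs_def; exact hs.ne' hs_def
    set u : ℂ := z / (r : ℂ) with hu_def
    set v : ℂ := w / (s : ℂ) with hv_def
    have hrC : (r : ℂ) ≠ 0 := by exact_mod_cast hr.ne'
    have hsC : (s : ℂ) ≠ 0 := by exact_mod_cast hs.ne'
    have hu : ‖u‖ = 1 := by
      rw [hu_def, norm_div, Complex.norm_real, Real.norm_eq_abs, _root_.abs_of_pos hr, div_self hr.ne']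
    have hv : ‖v‖ = 1 := by
      rw [hv_def, norm_div, Complex.norm_real, Real.norm_eq_abs, _root_.abs_of_pos hs, div_self hs.ne']
    have hz_eq : z = (r : ℂ) * u := by rw [hu_def]; field_simp
    have hw_eq : w = (s : ℂ) * v := by rw [hv_def]; field_simp
    -- rewrite f z and f w
    have hfz : ((r ^ (α - (n : ℝ)) : ℝ) : ℂ) * z ^ n = ((r ^ α : ℝ) : ℂ) * u ^ n := by
      conv_lhs => rw [hz_eq]
      rw [mul_zpow, ← mul_assoc]
      congr 1
      rw [show ((r : ℂ)) ^ n = ((r ^ n : ℝ) : ℂ) by push_cast; ring]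
      rw [← Complex.ofReal_mul]
      congr 1
      rw [show (r : ℝ) ^ n = r ^ ((n : ℝ)) from (Real.rpow_intCast _ n).symm,
        ← Real.rpow_add hr, sub_add_cancel]
    have hfw : ((s ^ (α - (n : ℝ)) : ℝ) : ℂ) * w ^ n = ((s ^ α : ℝ) : ℂ) * v ^ n := by
      conv_lhs => rw [hw_eq]
      rw [mul_zpow, ← mul_assoc]
      congr 1
      rw [show ((s : ℂ)) ^ n = ((s ^ n : ℝ) : ℂ) by push_cast; ring]
      rw [← Complex.ofReal_mul]
      congr 1
      rw [show (s : ℝ) ^ n = s ^ ((n : ℝ)) from (Real.rpow_intCast _ n).symm,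
        ← Real.rpow_add hs, sub_add_cancel]
    have habs_un : ‖u ^ n‖ = 1 := by rw [norm_zpow, hu, one_zpow]
    -- estimate |u - v|
    have huv : ‖u - v‖ ≤ 2 * d / r := by
      have hsplit : u - v = (z - w) / (r : ℂ) + w * (((1 / r - 1 / s : ℝ)) : ℂ) := by
        rw [hu_def, hv_def]
        push_cast
        field_simp
        ring
      have h1 : ‖(z - w) / (r : ℂ)‖ = d / r := by
        rw [norm_div, Complex.norm_real, Real.norm_eq_abs, _root_.abs_of_pos hr, ← hd_def]
      have h2 : ‖w * (((1 / r - 1 / s : ℝ)) : ℂ)‖ ≤ d / r := by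
        rw [norm_mul, Complex.norm_real, Real.norm_eq_abs, ← hs_def]
        have habs : |1 / r - 1 / s| = |r - s| / (r * s) := by
          rw [div_sub_div 1 1 hr.ne' hs.ne', one_mul, mul_one, abs_div,
            _root_.abs_of_pos (mul_pos hr hs), abs_sub_comm]
        rw [habs]
        have heq : s * (|r - s| / (r * s)) = |r - s| / r := by
          field_simp
        rw [heq]
        gcongr
      calc ‖u - v‖
          ≤ ‖(z - w) / (r : ℂ)‖
              + ‖w * (((1 / r - 1 / s : ℝ)) : ℂ)‖ := by
            rw [hsplit]; exact norm_add_le _ _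
        _ ≤ d / r + d / r := by rw [h1]; linarith
        _ = 2 * d / r := by ring
    -- main decomposition
    rw [hfz, hfw, show ((r ^ α : ℝ) : ℂ) * u ^ n - ((s ^ α : ℝ) : ℂ) * v ^ n
        = (((r ^ α - s ^ α : ℝ)) : ℂ) * u ^ n + ((s ^ α : ℝ) : ℂ) * (u ^ n - v ^ n) by
      push_cast; ring]
    have key : d / r * r ^ α ≤ d ^ α := by
      have hdr1 : d / r ≤ 1 := by rw [div_le_one hr]; linarith
      have hdr0 : 0 < d / r := div_pos hd hr
      have h1 : d / r ≤ (d / r) ^ α := by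
        have := Real.rpow_le_rpow_of_exponent_ge hdr0 hdr1 hα1.le
        rwa [Real.rpow_one] at this
      calc d / r * r ^ α ≤ (d / r) ^ α * r ^ α :=
            mul_le_mul_of_nonneg_right h1 (Real.rpow_nonneg hr0 α)
        _ = d ^ α := by
            rw [← Real.mul_rpow hdr0.le hr0, div_mul_cancel₀ _ hr.ne']
    have t1 : |r ^ α - s ^ α| ≤ d ^ α := by
      rw [_root_.abs_of_nonneg (sub_nonneg.2 (Real.rpow_le_rpow hs0 hwz hα0.le))]
      refine le_trans (rpow_sub_rpow_le hα0.le hα1.le hs0 hwz) ?_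
      exact Real.rpow_le_rpow (by linarith [(le_abs_self (r - s)).trans hrs])
        ((le_abs_self _).trans hrs) hα0.le
    have t2 : s ^ α * ‖u ^ n - v ^ n‖ ≤ 2 * (n.natAbs : ℝ) * d ^ α := by
      have hb := unit_zpow_sub_zpow u v hu hv n
      have hsr : s ^ α ≤ r ^ α := Real.rpow_le_rpow hs0 hwz hα0.le
      have habs_nn : 0 ≤ ‖u - v‖ := norm_nonneg _
      have step1 : s ^ α * ‖u ^ n - v ^ n‖
          ≤ r ^ α * ((n.natAbs : ℝ) * (2 * d / r)) := by
        have hbb : ‖u ^ n - v ^ n‖ ≤ (n.natAbs : ℝ) * (2 * d / r) :=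
          hb.trans (mul_le_mul_of_nonneg_left huv hk0)
        calc s ^ α * ‖u ^ n - v ^ n‖
            ≤ s ^ α * ((n.natAbs : ℝ) * (2 * d / r)) :=
              mul_le_mul_of_nonneg_left hbb (Real.rpow_nonneg hs0 α)
          _ ≤ r ^ α * ((n.natAbs : ℝ) * (2 * d / r)) := by
              apply mul_le_mul_of_nonneg_right hsr
              positivity
      refine step1.trans ?_
      calc r ^ α * ((n.natAbs : ℝ) * (2 * d / r))
          = 2 * (n.natAbs : ℝ) * (d / r * r ^ α) := by ring
        _ ≤ 2 * (n.natAbs : ℝ) * d ^ α := by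
            apply mul_le_mul_of_nonneg_left key
            positivity
    calc ‖(((r ^ α - s ^ α : ℝ)) : ℂ) * u ^ n
            + ((s ^ α : ℝ) : ℂ) * (u ^ n - v ^ n)‖
        ≤ ‖(((r ^ α - s ^ α : ℝ)) : ℂ) * u ^ n‖
            + ‖((s ^ α : ℝ) : ℂ) * (u ^ n - v ^ n)‖ :=
          norm_add_le _ _
      _ = |r ^ α - s ^ α| + s ^ α * ‖u ^ n - v ^ n‖ := by
          rw [norm_mul, norm_mul, Complex.norm_real, Real.norm_eq_abs, Complex.norm_real, Real.norm_eq_abs, habs_un, mul_one,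
            _root_.abs_of_nonneg (Real.rpow_nonneg hs0 α)]
      _ ≤ d ^ α + 2 * (n.natAbs : ℝ) * d ^ α := by linarith
      _ ≤ (2 * (n.natAbs : ℝ) + 4) * d ^ α := by nlinarith

/-- Lemma 2.2 (nl:2): for `α ∈ (0,1)` and `n : ℤ`, there is `C > 0` such that
`| |z|^(α−n) z^n − |w|^(α−n) w^n | ≤ C |z − w|^α` for all `z w : ℂ`. -/
theorem nonlinearity_holder_estimate (α : ℝ) (hα0 : 0 < α) (hα1 : α < 1) (n : ℤ) :
    ∃ C : ℝ, 0 < C ∧ ∀ z w : ℂ,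
      ‖((‖z‖ ^ (α - (n : ℝ)) : ℝ) : ℂ) * z ^ n
          - ((‖w‖ ^ (α - (n : ℝ)) : ℝ) : ℂ) * w ^ n‖
        ≤ C * ‖z - w‖ ^ α := by
  refine ⟨2 * (n.natAbs : ℝ) + 4, by positivity, fun z w => ?_⟩
  rcases le_total (‖w‖) (‖z‖) with h | h
  · exact key_estimate hα0 hα1 n z w h
  · have hkey := key_estimate hα0 hα1 n w z h
    rw [show (((‖z‖ ^ (α - (n : ℝ)) : ℝ) : ℂ) * z ^ n
        - ((‖w‖ ^ (α - (n : ℝ)) : ℝ) : ℂ) * w ^ n)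
      = -(((‖w‖ ^ (α - (n : ℝ)) : ℝ) : ℂ) * w ^ n
        - ((‖z‖ ^ (α - (n : ℝ)) : ℝ) : ℂ) * z ^ n) by ring,
      norm_neg, show z - w = -(w - z) by ring, norm_neg]
    exact hkey
end

section
/- Let p ∈ (0,2) be real and n ∈ ℕ (including n = 0). There exists a constant C > 0 (depending on p and n) such that for all reals a > 0 and all complex z one has | ( |z|^{p−n} − (a + |z|²)^{(p−n)/2} ) z^n | ≤ C a^{p/2}. -/
open Real

/-- Mean-value estimate: for `s ≤ 1` and `t ≥ 0`, `|(1+t)^s - 1| ≤ |s| * t`. -/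
lemma abs_rpow_one_add_sub_one_le {s t : ℝ} (hs : s ≤ 1) (ht : 0 ≤ t) :
    |(1 + t) ^ s - 1| ≤ |s| * t := by
  have hderiv : ∀ u ∈ Set.Icc (0 : ℝ) t,
      HasDerivWithinAt (fun u : ℝ => (1 + u) ^ s)
        (s * (1 + u) ^ (s - 1)) (Set.Icc (0 : ℝ) t) u := by
    intro u hu
    have hu0 : (0 : ℝ) < 1 + u := by linarith [hu.1]
    have h1 : HasDerivAt (fun v : ℝ => v ^ s) (s * (1 + u) ^ (s - 1)) (1 + u) :=
      Real.hasDerivAt_rpow_const (Or.inl hu0.ne')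
    have h2 : HasDerivAt (fun u : ℝ => 1 + u) 1 u := by
      simpa using (hasDerivAt_id u).const_add (1 : ℝ)
    have := h1.comp u h2
    rw [mul_one] at this
    exact this.hasDerivWithinAt
  have hbound : ∀ u ∈ Set.Icc (0 : ℝ) t, ‖s * (1 + u) ^ (s - 1)‖ ≤ |s| := by
    intro u hu
    have hu0 : (1 : ℝ) ≤ 1 + u := by linarith [hu.1]
    have h1 : (1 + u) ^ (s - 1) ≤ 1 :=
      Real.rpow_le_one_of_one_le_of_nonpos hu0 (by linarith)
    have h2 : (0 : ℝ) ≤ (1 + u) ^ (s - 1) := Real.rpow_nonneg (by linarith) _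
    rw [Real.norm_eq_abs, abs_mul, abs_of_nonneg h2]
    nlinarith [abs_nonneg s]
  have := (convex_Icc (0 : ℝ) t).norm_image_sub_le_of_norm_hasDerivWithin_le
    hderiv hbound (Set.left_mem_Icc.2 ht) (Set.right_mem_Icc.2 ht)
  simpa [Real.norm_eq_abs, abs_of_nonneg ht] using this

/-- Lemma 5.4 (mph:1): for `p ∈ (0,2)` and `n : ℕ`, there is `C > 0` such that
`| (|z|^(p−n) − (a + |z|²)^((p−n)/2)) z^n | ≤ C a^(p/2)` for all `a > 0` and `z : ℂ`. -/
theorem modification_error_bound (p : ℝ) (hp0 : 0 < p) (hp2 : p < 2) (n : ℕ) :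
    ∃ C : ℝ, 0 < C ∧ ∀ a : ℝ, 0 < a → ∀ z : ℂ,
      ‖((((‖z‖ ^ (p - (n : ℝ))
            - (a + ‖z‖ ^ 2) ^ ((p - (n : ℝ)) / 2)) : ℝ) : ℂ) * z ^ n)‖
        ≤ C * a ^ (p / 2) := by
  set s : ℝ := (p - (n : ℝ)) / 2 with hs_def
  have hn0 : (0 : ℝ) ≤ (n : ℝ) := Nat.cast_nonneg n
  have hs1 : s ≤ 1 := by rw [hs_def]; linarith
  refine ⟨|s| + 3, by positivity, ?_⟩
  intro a ha z
  set r : ℝ := ‖z‖ with hr_def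
  have hr0 : 0 ≤ r := norm_nonneg z
  have hap : (0 : ℝ) < a ^ (p / 2) := Real.rpow_pos_of_pos ha _
  -- rewrite the LHS
  have hLHS : ‖((((r ^ (p - (n : ℝ)) - (a + r ^ 2) ^ s) : ℝ) : ℂ) * z ^ n)‖
      = |r ^ (p - (n : ℝ)) - (a + r ^ 2) ^ s| * r ^ n := by
    rw [norm_mul, Complex.norm_real, Real.norm_eq_abs, norm_pow]
  rw [hLHS]
  rcases eq_or_lt_of_le hr0 with hr | hr
  · -- r = 0
    rcases Nat.eq_zero_or_pos n with hn | hn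
    · subst hn
      rw [← hr]
      have e1 : (0:ℝ) ^ (p - ((0:ℕ):ℝ)) = 0 := by
        rw [Nat.cast_zero, sub_zero]; exact Real.zero_rpow hp0.ne'
      have e2 : (0:ℝ) ^ (2:ℕ) = 0 := by norm_num
      rw [e1, e2, add_zero, pow_zero, mul_one, zero_sub, abs_neg]
      have hseq : a ^ s = a ^ (p / 2) := by rw [hs_def, Nat.cast_zero, sub_zero]
      rw [hseq, abs_of_pos hap]
      nlinarith [abs_nonneg s, hap]
    · rw [← hr, zero_pow (by omega : n ≠ 0), mul_zero]
      positivity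
  · -- r > 0
    set x : ℝ := r ^ 2 with hx_def
    have hx : 0 < x := by positivity
    have hx2 : x = r ^ (2 : ℝ) := by
      rw [hx_def, ← Real.rpow_natCast r 2]; norm_num
    have hrs : r ^ (p - (n : ℝ)) = x ^ s := by
      rw [hx2, ← Real.rpow_mul hr0]
      congr 1
      rw [hs_def]; ring
    have hrn : (r : ℝ) ^ n = x ^ ((n : ℝ) / 2) := by
      rw [hx2, ← Real.rpow_mul hr0]
      have h2n : 2 * ((n : ℝ) / 2) = (n : ℝ) := by ring
      rw [h2n, Real.rpow_natCast]
    rw [hrs, hrn]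
    have hsum : s + (n : ℝ) / 2 = p / 2 := by rw [hs_def]; ring
    rcases le_or_gt x a with hxa | hax
    · -- x ≤ a : crude bound
      have h1 : |x ^ s - (a + x) ^ s| ≤ x ^ s + (a + x) ^ s := by
        have := abs_sub (x ^ s) ((a + x) ^ s)
        rwa [abs_of_nonneg (Real.rpow_nonneg hx.le _),
          abs_of_nonneg (Real.rpow_nonneg (by linarith) _)] at this
      have hxn : (0:ℝ) ≤ x ^ ((n : ℝ) / 2) := Real.rpow_nonneg hx.le _
      have h2 : x ^ s * x ^ ((n : ℝ) / 2) ≤ a ^ (p / 2) := by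
        rw [← Real.rpow_add hx, hsum]
        exact Real.rpow_le_rpow hx.le hxa (by positivity)
      have h3 : (a + x) ^ s ≤ 2 * a ^ s := by
        rcases le_or_gt 0 s with hs0 | hs0
        · calc (a + x) ^ s ≤ (2 * a) ^ s :=
                Real.rpow_le_rpow (by linarith) (by linarith) hs0
            _ = 2 ^ s * a ^ s := Real.mul_rpow (by norm_num) ha.le
            _ ≤ 2 * a ^ s := by
                have : (2:ℝ) ^ s ≤ 2 ^ (1:ℝ) :=
                  Real.rpow_le_rpow_of_exponent_le (by norm_num) hs1
                have h4 : (0:ℝ) ≤ a ^ s := Real.rpow_nonneg ha.le _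
                nlinarith [this, h4]
        · have : (a + x) ^ s ≤ a ^ s :=
            Real.rpow_le_rpow_of_nonpos ha (by linarith) hs0.le
          have h4 : (0:ℝ) < a ^ s := Real.rpow_pos_of_pos ha _
          linarith
      have h5 : (a + x) ^ s * x ^ ((n : ℝ) / 2) ≤ 2 * a ^ (p / 2) := by
        have h6 : x ^ ((n : ℝ) / 2) ≤ a ^ ((n : ℝ) / 2) :=
          Real.rpow_le_rpow hx.le hxa (by positivity)
        calc (a + x) ^ s * x ^ ((n : ℝ) / 2)
            ≤ 2 * a ^ s * a ^ ((n : ℝ) / 2) := by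
              apply mul_le_mul h3 h6 hxn (by positivity)
          _ = 2 * a ^ (p / 2) := by rw [mul_assoc, ← Real.rpow_add ha, hsum]
      calc |x ^ s - (a + x) ^ s| * x ^ ((n : ℝ) / 2)
          ≤ (x ^ s + (a + x) ^ s) * x ^ ((n : ℝ) / 2) :=
            mul_le_mul_of_nonneg_right h1 hxn
        _ = x ^ s * x ^ ((n : ℝ) / 2) + (a + x) ^ s * x ^ ((n : ℝ) / 2) := by ring
        _ ≤ a ^ (p / 2) + 2 * a ^ (p / 2) := add_le_add h2 h5
        _ ≤ (|s| + 3) * a ^ (p / 2) := by nlinarith [abs_nonneg s, hap]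
    · -- a < x : mean value estimate
      set t : ℝ := a / x with ht_def
      have ht0 : 0 < t := by positivity
      have hax' : a + x = x * (1 + t) := by
        rw [ht_def]; field_simp; ring
      have hsplit : (a + x) ^ s = x ^ s * (1 + t) ^ s := by
        rw [hax', Real.mul_rpow hx.le (by linarith)]
      have hxs : (0:ℝ) ≤ x ^ s := Real.rpow_nonneg hx.le _
      have h1 : |x ^ s - (a + x) ^ s| = x ^ s * |(1 + t) ^ s - 1| := by
        have hexp : x ^ s - (a + x) ^ s = x ^ s * (1 - (1 + t) ^ s) := by
          rw [hsplit]; ring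
        rw [hexp, abs_mul, abs_of_nonneg hxs, abs_sub_comm]
      have h2 : |(1 + t) ^ s - 1| ≤ |s| * t := abs_rpow_one_add_sub_one_le hs1 ht0.le
      have hxn : (0:ℝ) ≤ x ^ ((n : ℝ) / 2) := Real.rpow_nonneg hx.le _
      have h3 : x ^ s * x ^ ((n : ℝ) / 2) = x ^ (p / 2) := by
        rw [← Real.rpow_add hx, hsum]
      have h4 : x ^ (p / 2) * t = a * x ^ (p / 2 - 1) := by
        rw [ht_def, Real.rpow_sub hx, Real.rpow_one]
        field_simp
      have h5 : x ^ (p / 2 - 1) ≤ a ^ (p / 2 - 1) :=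
        Real.rpow_le_rpow_of_nonpos ha hax.le (by linarith)
      have h6 : a * a ^ (p / 2 - 1) = a ^ (p / 2) := by
        nth_rewrite 1 [← Real.rpow_one a]
        rw [← Real.rpow_add ha]; norm_num
      calc |x ^ s - (a + x) ^ s| * x ^ ((n : ℝ) / 2)
          = x ^ s * |(1 + t) ^ s - 1| * x ^ ((n : ℝ) / 2) := by rw [h1]
        _ ≤ x ^ s * (|s| * t) * x ^ ((n : ℝ) / 2) := by
            apply mul_le_mul_of_nonneg_right _ hxn
            exact mul_le_mul_of_nonneg_left h2 hxs
        _ = |s| * (x ^ (p / 2) * t) := by rw [mul_comm (x ^ s) (|s| * t), mul_assoc, h3]; ring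
        _ = |s| * (a * x ^ (p / 2 - 1)) := by rw [h4]
        _ ≤ |s| * (a * a ^ (p / 2 - 1)) := by
            apply mul_le_mul_of_nonneg_left _ (abs_nonneg s)
            exact mul_le_mul_of_nonneg_left h5 ha.le
        _ = |s| * a ^ (p / 2) := by rw [h6]
        _ ≤ (|s| + 3) * a ^ (p / 2) := by nlinarith [hap]
end

section
/- Let p ∈ (0,1) be real and n ∈ ℕ (including n = 0). There exists a constant C > 0 (depending on p and n) such that for all reals a > 0 and all complex z, w one has | (a + |z|²)^{(p−n)/2} |z|^n − (a + |w|²)^{(p−n)/2} |w|^n | ≤ C |z − w|^p. -/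
open Real Set

private lemma rpow_subadd {x y p : ℝ} (hx : 0 ≤ x) (hy : 0 ≤ y) (hp : 0 ≤ p) (hp1 : p ≤ 1) :
    (x + y) ^ p ≤ x ^ p + y ^ p := by
  lift x to NNReal using hx
  lift y to NNReal using hy
  have := NNReal.rpow_add_le_add_rpow x y hp hp1
  exact_mod_cast this

/-- The derivative of `g r = (a + r^2)^c * r^n`. -/
private lemma hasDerivAt_g (a c : ℝ) (ha : 0 < a) (n : ℕ) (r : ℝ) :
    HasDerivAt (fun r : ℝ => (a + r ^ 2) ^ c * r ^ n)
      (c * (a + r ^ 2) ^ (c - 1) * (2 * r) * r ^ n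
        + (a + r ^ 2) ^ c * ((n : ℝ) * r ^ (n - 1))) r := by
  have h1 : HasDerivAt (fun r : ℝ => a + r ^ 2) (2 * r) r := by
    simpa using (hasDerivAt_pow 2 r).const_add a
  have h2 : HasDerivAt (fun x : ℝ => x ^ c) (c * (a + r ^ 2) ^ (c - 1)) (a + r ^ 2) :=
    Real.hasDerivAt_rpow_const (Or.inl (by positivity))
  exact (h2.comp r h1).mul (hasDerivAt_pow n r)

/-- One-dimensional main estimate, for `0 ≤ s ≤ r`. -/
private lemma oneD (p : ℝ) (hp0 : 0 < p) (hp1 : p < 1) (n : ℕ) (a : ℝ) (ha : 0 < a)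
    (s r : ℝ) (hs : 0 ≤ s) (hsr : s ≤ r) :
    0 ≤ (a + r ^ 2) ^ ((p - (n : ℝ)) / 2) * r ^ n
          - (a + s ^ 2) ^ ((p - (n : ℝ)) / 2) * s ^ n ∧
    (a + r ^ 2) ^ ((p - (n : ℝ)) / 2) * r ^ n
          - (a + s ^ 2) ^ ((p - (n : ℝ)) / 2) * s ^ n ≤ ((p + n) / p) * (r - s) ^ p := by
  set c : ℝ := (p - (n : ℝ)) / 2 with hc
  set g : ℝ → ℝ := fun r => (a + r ^ 2) ^ c * r ^ n with hg
  set D : ℝ → ℝ := fun r => c * (a + r ^ 2) ^ (c - 1) * (2 * r) * r ^ n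
        + (a + r ^ 2) ^ c * ((n : ℝ) * r ^ (n - 1)) with hD
  have hgD : ∀ r : ℝ, HasDerivAt g (D r) r := fun r => hasDerivAt_g a c ha n r
  have hA : ∀ r : ℝ, 0 < a + r ^ 2 := fun r => by positivity
  -- the derivative is nonnegative and bounded by `(p+n) * r^(p-1)` for `r > 0`
  have hkey : ∀ r : ℝ, 0 < r → 0 ≤ D r ∧ D r ≤ (p + n) * r ^ (p - 1) := by
    intro r hr
    have hAr := hA r
    have hr2A : r ^ 2 ≤ a + r ^ 2 := by linarith
    have hr2pos : (0 : ℝ) < r ^ 2 := by positivity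
    rcases Nat.eq_zero_or_pos n with hn | hn
    · subst hn
      have hDval : D r = p * r * (a + r ^ 2) ^ (c - 1) := by
        simp only [hD, Nat.cast_zero, zero_mul, mul_zero, add_zero, pow_zero, mul_one]
        have : c = p / 2 := by simp [hc]
        rw [this]; ring
      constructor
      · rw [hDval]; positivity
      · rw [hDval]
        have h1 : (a + r ^ 2) ^ (c - 1) ≤ (r ^ 2) ^ (c - 1) :=
          Real.rpow_le_rpow_of_nonpos hr2pos hr2A (by simp [hc]; linarith)
        have h2 : (r ^ 2) ^ (c - 1) = r ^ (p - 2) := by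
          rw [← Real.rpow_natCast r 2, ← Real.rpow_mul hr.le]
          congr 1
          simp [hc]; ring
        have h3 : p * r * (a + r ^ 2) ^ (c - 1) ≤ p * r * r ^ (p - 2) := by
          apply mul_le_mul_of_nonneg_left (h2 ▸ h1) (by positivity)
        have h4 : p * r * r ^ (p - 2) = p * r ^ (p - 1) := by
          rw [mul_assoc]
          congr 1
          rw [show (r : ℝ) * r ^ (p - 2) = r ^ (1 : ℝ) * r ^ (p - 2) from by
            rw [Real.rpow_one], ← Real.rpow_add hr]
          congr 1; ring
        calc p * r * (a + r ^ 2) ^ (c - 1) ≤ p * r ^ (p - 1) := h4 ▸ h3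
          _ ≤ (p + ((0 : ℕ) : ℝ)) * r ^ (p - 1) := by simp
    · -- n ≥ 1
      obtain ⟨k, rfl⟩ : ∃ k, n = k + 1 := ⟨n - 1, (Nat.succ_pred_eq_of_pos hn).symm⟩
      have hDval : D r = (a + r ^ 2) ^ (c - 1) * r ^ k * (p * r ^ 2 + (k + 1 : ℝ) * a) := by
        have hAc : (a + r ^ 2) ^ c = (a + r ^ 2) ^ (c - 1) * (a + r ^ 2) := by
          rw [show c = c - 1 + 1 by ring, Real.rpow_add_one hAr.ne']
          ring_nf
        have h2c : 2 * c = p - (k + 1 : ℝ) := by push_cast [hc]; ring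
        simp only [hD, Nat.add_sub_cancel]
        rw [pow_succ r k, hAc]
        push_cast
        linear_combination ((a + r ^ 2) ^ (c - 1) * r ^ k * r ^ 2) * h2c
      constructor
      · rw [hDval]
        have : (0 : ℝ) ≤ p * r ^ 2 + (k + 1 : ℝ) * a := by positivity
        positivity
      · rw [hDval]
        have hcle : c ≤ 0 := by
          rw [hc]; push_cast
          have : (0 : ℝ) ≤ (k : ℝ) := Nat.cast_nonneg k
          linarith
        have h1 : p * r ^ 2 + (k + 1 : ℝ) * a ≤ (p + (k + 1 : ℝ)) * (a + r ^ 2) := by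
          nlinarith [hA r, hr2pos]
        have h2 : (a + r ^ 2) ^ (c - 1) * r ^ k * (p * r ^ 2 + (k + 1 : ℝ) * a)
            ≤ (a + r ^ 2) ^ (c - 1) * r ^ k * ((p + (k + 1 : ℝ)) * (a + r ^ 2)) := by
          apply mul_le_mul_of_nonneg_left h1 (by positivity)
        have hAc : (a + r ^ 2) ^ (c - 1) * (a + r ^ 2) = (a + r ^ 2) ^ c := by
          rw [show c = c - 1 + 1 by ring, Real.rpow_add_one hAr.ne']
          ring_nf
        have h3 : (a + r ^ 2) ^ c ≤ (r ^ 2) ^ c :=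
          Real.rpow_le_rpow_of_nonpos hr2pos hr2A hcle
        have h4 : (r ^ 2) ^ c * r ^ k = r ^ (p - 1) := by
          rw [← Real.rpow_natCast r 2, ← Real.rpow_mul hr.le, ← Real.rpow_natCast r k,
            ← Real.rpow_add hr]
          congr 1
          rw [hc]; push_cast; ring
        calc (a + r ^ 2) ^ (c - 1) * r ^ k * (p * r ^ 2 + (k + 1 : ℝ) * a)
            ≤ (a + r ^ 2) ^ (c - 1) * r ^ k * ((p + (k + 1 : ℝ)) * (a + r ^ 2)) := h2
          _ = (p + (k + 1 : ℝ)) * ((a + r ^ 2) ^ c * r ^ k) := by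
              rw [← hAc]; ring
          _ ≤ (p + (k + 1 : ℝ)) * ((r ^ 2) ^ c * r ^ k) := by
              apply mul_le_mul_of_nonneg_left
                (mul_le_mul_of_nonneg_right h3 (by positivity)) (by positivity)
          _ = (p + ((k : ℝ) + 1)) * r ^ (p - 1) := by rw [h4]
          _ = (p + ((k + 1 : ℕ) : ℝ)) * r ^ (p - 1) := by push_cast; ring
  -- `g` is monotone on `[0, ∞)`
  have hgdiff : Differentiable ℝ g := fun r => (hgD r).differentiableAt
  have hgmono : MonotoneOn g (Ici 0) := by
    apply monotoneOn_of_deriv_nonneg (convex_Ici 0) hgdiff.continuous.continuousOn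
      hgdiff.differentiableOn
    intro x hx
    rw [interior_Ici] at hx
    rw [(hgD x).deriv]
    exact (hkey x hx).1
  -- `h r = ((p+n)/p) r^p - g r` is monotone on `[0, ∞)`
  set h : ℝ → ℝ := fun r => ((p + n) / p) * r ^ p - g r with hh
  have hhmono : MonotoneOn h (Ici 0) := by
    apply monotoneOn_of_deriv_nonneg (convex_Ici 0)
    · apply ContinuousOn.sub _ hgdiff.continuous.continuousOn
      apply ContinuousOn.mul continuousOn_const
      intro x _
      exact (Real.continuousAt_rpow_const x p (Or.inr hp0.le)).continuousWithinAt
    · intro x hx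
      rw [interior_Ici] at hx
      exact (((Real.hasDerivAt_rpow_const (Or.inl hx.ne')).const_mul
        ((p + n) / p)).sub (hgD x)).differentiableAt.differentiableWithinAt
    · intro x hx
      rw [interior_Ici] at hx
      have hder : HasDerivAt h ((p + n) / p * (p * x ^ (p - 1)) - D x) x :=
        ((Real.hasDerivAt_rpow_const (Or.inl hx.ne')).const_mul ((p + n) / p)).sub (hgD x)
      rw [hder.deriv]
      have : (p + n) / p * (p * x ^ (p - 1)) = (p + n) * x ^ (p - 1) := by
        field_simp
      rw [this]
      linarith [(hkey x hx).2]
  have hr : (0 : ℝ) ≤ r := hs.trans hsr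
  constructor
  · have h0 : (a + s ^ 2) ^ c * s ^ n ≤ (a + r ^ 2) ^ c * r ^ n := hgmono hs (hr : r ∈ Ici 0) hsr
    linarith
  · have h1 : (p + n) / p * s ^ p - (a + s ^ 2) ^ c * s ^ n
        ≤ (p + n) / p * r ^ p - (a + r ^ 2) ^ c * r ^ n :=
      hhmono (hs : s ∈ Ici 0) (hr : r ∈ Ici 0) hsr
    have h3 : r ^ p - s ^ p ≤ (r - s) ^ p := by
      have := rpow_subadd (x := r - s) (y := s) (by linarith) hs hp0.le hp1.le
      rw [sub_add_cancel] at this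
      linarith
    have hC : (0 : ℝ) ≤ (p + n) / p := by positivity
    nlinarith [mul_le_mul_of_nonneg_left h3 hC]

/-- Lemma 5.4 (mph:2), second part: for `p ∈ (0,1)` and `n : ℕ`, there is `C > 0` such that
`| (a + |z|²)^((p−n)/2) |z|^n − (a + |w|²)^((p−n)/2) |w|^n | ≤ C |z − w|^p`
for all `a > 0` and `z w : ℂ`. -/
theorem regularized_modulus_power_holder (p : ℝ) (hp0 : 0 < p) (hp1 : p < 1) (n : ℕ) :
    ∃ C : ℝ, 0 < C ∧ ∀ a : ℝ, 0 < a → ∀ z w : ℂ,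
      |(a + ‖z‖ ^ 2) ^ ((p - (n : ℝ)) / 2) * ‖z‖ ^ n
          - (a + ‖w‖ ^ 2) ^ ((p - (n : ℝ)) / 2) * ‖w‖ ^ n|
        ≤ C * ‖z - w‖ ^ p := by
  refine ⟨(p + n) / p, by positivity, fun a ha z w => ?_⟩
  have key : ∀ z w : ℂ, ‖w‖ ≤ ‖z‖ →
      |(a + ‖z‖ ^ 2) ^ ((p - (n : ℝ)) / 2) * ‖z‖ ^ n
          - (a + ‖w‖ ^ 2) ^ ((p - (n : ℝ)) / 2) * ‖w‖ ^ n|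
        ≤ (p + n) / p * ‖z - w‖ ^ p := by
    intro z w hzw
    obtain ⟨h1, h2⟩ := oneD p hp0 hp1 n a ha (‖w‖) (‖z‖)
      (norm_nonneg w) hzw
    rw [abs_of_nonneg h1]
    have h3 : (‖z‖ - ‖w‖) ^ p ≤ ‖z - w‖ ^ p :=
      Real.rpow_le_rpow (by linarith) (norm_sub_norm_le z w) hp0.le
    calc _ ≤ (p + n) / p * (‖z‖ - ‖w‖) ^ p := h2
      _ ≤ (p + n) / p * ‖z - w‖ ^ p := by
          apply mul_le_mul_of_nonneg_left h3 (by positivity)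
  rcases le_total (‖w‖) (‖z‖) with hzw | hzw
  · exact key z w hzw
  · rw [abs_sub_comm, norm_sub_rev]
    exact key w z hzw
end

section
/- Let p ∈ (0,1) be real. For all reals a > 0 and all complex z one has | ( |z|^p − (a + |z|²)^{p/2} ) z | ≤ a^p |z|^{1−p}. -/
open Real

lemma my_add_rpow_le (x y q : ℝ) (hx : 0 ≤ x) (hy : 0 ≤ y) (hq : 0 ≤ q) (hq1 : q ≤ 1) :
    (x + y) ^ q ≤ x ^ q + y ^ q := by
  have h := NNReal.rpow_add_le_add_rpow x.toNNReal y.toNNReal hq hq1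
  have := NNReal.coe_le_coe.mpr h
  push_cast at this
  rwa [Real.coe_toNNReal _ hx, Real.coe_toNNReal _ hy] at this

lemma key_bound (p : ℝ) (hp0 : 0 < p) (hp1 : p < 1) (a : ℝ) (ha : 0 < a)
    (u : ℝ) (hu : 0 < u) :
    ((a + u) ^ (p / 2) - u ^ (p / 2)) * u ^ (p / 2) ≤ a ^ p := by
  set q := p / 2 with hq
  have hq0 : 0 < q := by positivity
  have hq1 : q ≤ 1 := by linarith
  have h2q : q + q = p := by ring
  rcases le_total u a with hua | hau
  · -- u ≤ a : subadditivity gives (a+u)^q - u^q ≤ a^q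
    have h1 : (a + u) ^ q ≤ a ^ q + u ^ q :=
      my_add_rpow_le a u q ha.le hu.le hq0.le hq1
    have h2 : (a + u) ^ q - u ^ q ≤ a ^ q := by linarith
    have h3 : u ^ q ≤ a ^ q := Real.rpow_le_rpow hu.le hua hq0.le
    calc ((a + u) ^ q - u ^ q) * u ^ q ≤ a ^ q * a ^ q := by
          apply mul_le_mul h2 h3 (Real.rpow_nonneg hu.le q)
          exact Real.rpow_nonneg ha.le q
      _ = a ^ p := by rw [← Real.rpow_add ha, h2q]
  · -- a ≤ u : Bernoulli
    have hru : (0:ℝ) < 1 + a / u := by positivity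
    have hB : (1 + a / u) ^ q ≤ 1 + q * (a / u) :=
      rpow_one_add_le_one_add_mul_self (le_trans (by norm_num) (div_nonneg ha.le hu.le)) hq0.le hq1
    have hsplit : a + u = u * (1 + a / u) := by field_simp; ring
    have h1 : (a + u) ^ q ≤ u ^ q * (1 + q * (a / u)) := by
      rw [hsplit, Real.mul_rpow hu.le hru.le]
      exact mul_le_mul_of_nonneg_left hB (Real.rpow_nonneg hu.le q)
    have h2 : (a + u) ^ q - u ^ q ≤ u ^ q * (q * (a / u)) := by nlinarith [Real.rpow_nonneg hu.le q]
    have h3 : ((a + u) ^ q - u ^ q) * u ^ q ≤ q * a * u ^ (p - 1) := by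
      have : u ^ q * (q * (a / u)) * u ^ q = q * a * u ^ (p - 1) := by
        rw [show u ^ (p-1) = u ^ q * u ^ q * u⁻¹ by
          rw [← Real.rpow_add hu, h2q, ← Real.rpow_neg_one u, ← Real.rpow_add hu]; ring_nf]
        field_simp
      calc ((a + u) ^ q - u ^ q) * u ^ q ≤ u ^ q * (q * (a / u)) * u ^ q := by
            apply mul_le_mul_of_nonneg_right h2 (Real.rpow_nonneg hu.le q)
        _ = q * a * u ^ (p - 1) := this
    have h4 : u ^ (p - 1) ≤ a ^ (p - 1) :=
      Real.rpow_le_rpow_of_nonpos ha hau (by linarith)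
    calc ((a + u) ^ q - u ^ q) * u ^ q ≤ q * a * u ^ (p - 1) := h3
      _ ≤ q * a * a ^ (p - 1) := by
          apply mul_le_mul_of_nonneg_left h4; positivity
      _ = q * a ^ p := by
          rw [mul_assoc,
            ← Real.rpow_one_add' ha.le (by rw [show (1:ℝ)+(p-1)=p by ring]; exact hp0.ne'),
            show (1:ℝ)+(p-1)=p by ring]
      _ ≤ a ^ p := by
          have : (0:ℝ) ≤ a ^ p := Real.rpow_nonneg ha.le p
          nlinarith

/-- Lemma 5.4 (mph:3): for `p ∈ (0,1)`, all `a > 0` and `z : ℂ`,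
`| (|z|^p − (a + |z|²)^(p/2)) z | ≤ a^p |z|^(1−p)`. -/
theorem modification_error_weighted_bound (p : ℝ) (hp0 : 0 < p) (hp1 : p < 1) :
    ∀ a : ℝ, 0 < a → ∀ z : ℂ,
      ‖(((‖z‖ ^ p - (a + ‖z‖ ^ 2) ^ (p / 2)) : ℝ) : ℂ) * z‖
        ≤ a ^ p * ‖z‖ ^ (1 - p) := by
  intro a ha z
  rcases eq_or_ne z 0 with rfl | hz
  · simp [Real.zero_rpow (show 1 - p ≠ 0 by intro h; linarith)]
  set r := ‖z‖ with hr
  have hrpos : 0 < r := by simpa [hr] using norm_pos_iff.mpr hz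
  rw [norm_mul, Complex.norm_real, Real.norm_eq_abs]
  -- rewrite r^2 as rpow and identify r^p = (r^2)^(p/2)
  have hupow : r ^ (2:ℕ) = (r:ℝ) ^ (2:ℝ) := by
    rw [← Real.rpow_natCast r 2]; norm_num
  have hrp : (r ^ (2:ℝ)) ^ (p / 2) = r ^ p := by
    rw [← Real.rpow_mul hrpos.le]; ring_nf
  have hDnn : r ^ p ≤ (a + r ^ (2:ℕ)) ^ (p / 2) := by
    rw [hupow, ← hrp]
    exact Real.rpow_le_rpow (by positivity) (by linarith) (by positivity)
  have habs : |r ^ p - (a + r ^ (2:ℕ)) ^ (p / 2)| = (a + r ^ (2:ℕ)) ^ (p / 2) - r ^ p := by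
    rw [abs_sub_comm, abs_of_nonneg (by linarith)]
  rw [habs]
  -- reduce via r = r^p * r^(1-p)
  have hr_split : r = r ^ p * r ^ (1 - p) := by
    rw [← Real.rpow_add hrpos]; norm_num
  have key : ((a + r ^ (2:ℕ)) ^ (p / 2) - r ^ p) * r ^ p ≤ a ^ p := by
    have := key_bound p hp0 hp1 a ha (r ^ (2:ℝ)) (by positivity)
    rw [hrp] at this
    rwa [hupow]
  calc ((a + r ^ (2:ℕ)) ^ (p / 2) - r ^ p) * r
      = ((a + r ^ (2:ℕ)) ^ (p / 2) - r ^ p) * r ^ p * r ^ (1 - p) := by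
        rw [mul_assoc, ← hr_split]
    _ ≤ a ^ p * r ^ (1 - p) :=
        mul_le_mul_of_nonneg_right key (Real.rpow_nonneg hrpos.le _)
end

section
/- Let p ∈ (0,1) be real. There exists a constant C > 0 (depending on p) such that for all reals a > 0 and all complex z, w one has | |𝒜₂(a;z)| − |𝒜₂(a;w)| | ≤ C |z − w|^p, where 𝒜₂(a;z) = ( |z|^{p−2} − (a + |z|²)^{(p−2)/2} ) z²; i.e., the modulus of 𝒜₂(a;·) is Hölder continuous of order p on ℂ, uniformly in a > 0. -/
open Real

/-- Subadditivity of `rpow` for exponents in `(0,1]`. -/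
lemma my_rpow_subadd {p s d : ℝ} (hp0 : 0 < p) (hp1 : p ≤ 1) (hs : 0 ≤ s) (hd : 0 ≤ d) :
    (s + d) ^ p ≤ s ^ p + d ^ p := by
  rcases eq_or_lt_of_le hs with rfl | hs
  · simp; positivity
  rcases eq_or_lt_of_le hd with rfl | hd
  · simp; positivity
  have hsd : (0:ℝ) < s + d := by linarith
  have e1 : (s + d) ^ p = s * (s + d) ^ (p - 1) + d * (s + d) ^ (p - 1) := by
    rw [← add_mul, mul_comm, ← Real.rpow_add_one hsd.ne']
    ring_nf
  have e2 : (s + d) ^ (p - 1) ≤ s ^ (p - 1) :=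
    Real.rpow_le_rpow_of_nonpos hs (by linarith) (by linarith)
  have e3 : (s + d) ^ (p - 1) ≤ d ^ (p - 1) :=
    Real.rpow_le_rpow_of_nonpos hd (by linarith) (by linarith)
  have e4 : s * s ^ (p - 1) = s ^ p := by
    rw [mul_comm, ← Real.rpow_add_one hs.ne']; ring_nf
  have e5 : d * d ^ (p - 1) = d ^ p := by
    rw [mul_comm, ← Real.rpow_add_one hd.ne']; ring_nf
  calc (s + d) ^ p = s * (s + d) ^ (p - 1) + d * (s + d) ^ (p - 1) := e1
    _ ≤ s * s ^ (p - 1) + d * d ^ (p - 1) := by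
        have := mul_le_mul_of_nonneg_left e2 hs.le
        have := mul_le_mul_of_nonneg_left e3 hd.le
        linarith
    _ = s ^ p + d ^ p := by rw [e4, e5]

/-- The core trick: for `0 < A ≤ B` and `0 < q + 1`,
`A^q - B^q ≤ (B - A) * A^q / B`. -/
lemma my_rpow_diff_trick {A B q : ℝ} (hA : 0 < A) (hAB : A ≤ B) (hq : 0 < q + 1) :
    A ^ q - B ^ q ≤ (B - A) * A ^ q / B := by
  have hB : 0 < B := lt_of_lt_of_le hA hAB
  rw [le_div_iff₀ hB]
  have h1 : A ^ (q + 1) ≤ B ^ (q + 1) := Real.rpow_le_rpow hA.le hAB hq.le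
  have e1 : A ^ (q + 1) = A ^ q * A := Real.rpow_add_one hA.ne' q
  have e2 : B ^ (q + 1) = B ^ q * B := Real.rpow_add_one hB.ne' q
  nlinarith [h1, e1, e2]

lemma my_sq_rpow {t : ℝ} (ht : 0 < t) (p : ℝ) :
    (t ^ 2) ^ ((p - 2) / 2) = t ^ (p - 2) := by
  rw [← Real.rpow_natCast t 2, ← Real.rpow_mul ht.le]
  congr 1
  push_cast
  ring

/-- The key real estimate: `ψ a t = t^p - t² (a+t²)^((p-2)/2)` is uniformly `p`-Hölder. -/
lemma my_key (p a : ℝ) (hp0 : 0 < p) (hp1 : p < 1) (ha : 0 < a) (s r : ℝ)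
    (hs : 0 ≤ s) (hsr : s ≤ r) :
    |(r ^ p - r ^ 2 * (a + r ^ 2) ^ ((p - 2) / 2))
      - (s ^ p - s ^ 2 * (a + s ^ 2) ^ ((p - 2) / 2))| ≤ 5 * (r - s) ^ p := by
  have hq : (p - 2) / 2 < 0 := by linarith
  have hr : 0 ≤ r := le_trans hs hsr
  -- bounds on the subtracted term : 0 ≤ h t ≤ t^p
  have hpsi : ∀ t : ℝ, 0 ≤ t → 0 ≤ t ^ 2 * (a + t ^ 2) ^ ((p - 2) / 2) ∧
      t ^ 2 * (a + t ^ 2) ^ ((p - 2) / 2) ≤ t ^ p := by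
    intro t ht
    refine ⟨by positivity, ?_⟩
    rcases eq_or_lt_of_le ht with rfl | ht
    · simp [Real.zero_rpow hp0.ne']
    have h1 : (a + t ^ 2) ^ ((p - 2) / 2) ≤ (t ^ 2) ^ ((p - 2) / 2) :=
      Real.rpow_le_rpow_of_nonpos (by positivity) (by linarith) hq.le
    have h3 : t ^ 2 * t ^ (p - 2) = t ^ p := by
      rw [← Real.rpow_natCast t 2, ← Real.rpow_add ht]
      norm_num
    calc t ^ 2 * (a + t ^ 2) ^ ((p - 2) / 2)
        ≤ t ^ 2 * (t ^ 2) ^ ((p - 2) / 2) :=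
          mul_le_mul_of_nonneg_left h1 (by positivity)
      _ = t ^ 2 * t ^ (p - 2) := by rw [my_sq_rpow ht]
      _ = t ^ p := h3
  rcases eq_or_lt_of_le hsr with rfl | hsr'
  · simp [Real.zero_rpow hp0.ne']
  set d : ℝ := r - s with hd_def
  clear_value d
  have hd : 0 < d := by rw [hd_def]; linarith
  have hdp : 0 < d ^ p := Real.rpow_pos_of_pos hd p
  obtain ⟨hhr0, hhr1⟩ := hpsi r hr
  obtain ⟨hhs0, hhs1⟩ := hpsi s hs
  have hsp_le : s ^ p ≤ r ^ p := Real.rpow_le_rpow hs hsr hp0.le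
  rcases le_or_gt s d with hc | hc
  · -- small case : s ≤ d, so r ≤ 2d
    have hr2d : r ≤ d + d := by rw [hd_def] at hc ⊢; linarith
    have h1 : r ^ p ≤ (d + d) ^ p := Real.rpow_le_rpow hr hr2d hp0.le
    have h2 : (d + d) ^ p ≤ d ^ p + d ^ p := my_rpow_subadd hp0 hp1.le hd.le hd.le
    rw [abs_le]
    constructor <;> nlinarith
  · -- main case : 0 < d < s ≤ r
    have hs' : 0 < s := lt_trans hd hc
    have hr' : 0 < r := lt_of_lt_of_le hs' hsr
    set q : ℝ := (p - 2) / 2 with hq_def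
    set A : ℝ := a + s ^ 2 with hA_def
    set B : ℝ := a + r ^ 2 with hB_def
    clear_value q A B
    have hA : 0 < A := by rw [hA_def]; positivity
    have hB : 0 < B := by rw [hB_def]; positivity
    have hAB : A ≤ B := by rw [hA_def, hB_def]; linarith [pow_le_pow_left₀ hs hsr 2]
    -- exponent arithmetic helpers
    have hs2r2 : s ^ 2 ≤ r ^ 2 := pow_le_pow_left₀ hs hsr 2
    have hrsd : r ^ 2 - s ^ 2 ≤ d * (2 * r) := by
      rw [hd_def]; nlinarith [sq_nonneg (r - s)]
    have hsp2 : (s ^ 2) ^ q = s ^ (p - 2) := hq_def ▸ my_sq_rpow hs' p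
    have hrp2 : (r ^ 2) ^ q = r ^ (p - 2) := hq_def ▸ my_sq_rpow hr' p
    have hrr : r * r ^ (p - 2) = r ^ (p - 1) := by
      rw [mul_comm, ← Real.rpow_add_one hr'.ne']; ring_nf
    have hss : s ^ 2 * s ^ (p - 2) = s ^ p := by
      rw [← Real.rpow_natCast s 2, ← Real.rpow_add hs']; norm_num
    have hdd : d * d ^ (p - 1) = d ^ p := by
      rw [mul_comm, ← Real.rpow_add_one hd.ne']; ring_nf
    have hrs1 : r ^ (p - 1) ≤ s ^ (p - 1) :=
      Real.rpow_le_rpow_of_nonpos hs' hsr (by linarith)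
    have hsd1 : s ^ (p - 1) ≤ d ^ (p - 1) :=
      Real.rpow_le_rpow_of_nonpos hd hc.le (by linarith)
    -- bound 0 : |r^p - s^p| ≤ d^p
    have T0 : r ^ p - s ^ p ≤ d ^ p := by
      have := my_rpow_subadd hp0 hp1.le hs hd.le
      have hr_eq : s + d = r := by rw [hd_def]; ring
      rw [hr_eq] at this
      linarith
    -- bound 1 : 0 ≤ (r²-s²) B^q ≤ 2 d^p
    have hBq0 : 0 ≤ B ^ q := (Real.rpow_pos_of_pos hB q).le
    have hBqle : B ^ q ≤ r ^ (p - 2) := by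
      rw [← hrp2]
      exact Real.rpow_le_rpow_of_nonpos (by positivity) (by rw [hB_def]; linarith) hq.le
    have hrp2pos : 0 ≤ r ^ (p - 2) := (Real.rpow_pos_of_pos hr' _).le
    have T1a : 0 ≤ (r ^ 2 - s ^ 2) * B ^ q := by
      apply mul_nonneg _ hBq0; linarith
    have T1 : (r ^ 2 - s ^ 2) * B ^ q ≤ 2 * d ^ p := by
      have h1 : (r ^ 2 - s ^ 2) * B ^ q ≤ (d * (2 * r)) * r ^ (p - 2) :=
        mul_le_mul hrsd hBqle hBq0 (by positivity)
      have h2 : (d * (2 * r)) * r ^ (p - 2) = 2 * (d * r ^ (p - 1)) := by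
        rw [← hrr]; ring
      have h3 : d * r ^ (p - 1) ≤ d * d ^ (p - 1) :=
        mul_le_mul_of_nonneg_left (le_trans hrs1 hsd1) hd.le
      calc (r ^ 2 - s ^ 2) * B ^ q ≤ 2 * (d * r ^ (p - 1)) := h1.trans_eq h2
        _ ≤ 2 * (d * d ^ (p - 1)) := by linarith
        _ = 2 * d ^ p := by rw [hdd]
    -- bound 2 : 0 ≤ s² (A^q - B^q) ≤ 2 d^p
    have hABq : B ^ q ≤ A ^ q := Real.rpow_le_rpow_of_nonpos hA hAB hq.le
    have T2a : 0 ≤ s ^ 2 * (A ^ q - B ^ q) := by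
      apply mul_nonneg (by positivity); linarith
    have T2 : s ^ 2 * (A ^ q - B ^ q) ≤ 2 * d ^ p := by
      have htrick : A ^ q - B ^ q ≤ (B - A) * A ^ q / B :=
        my_rpow_diff_trick hA hAB (by rw [hq_def]; linarith)
      have hAqle : A ^ q ≤ s ^ (p - 2) := by
        rw [← hsp2]
        exact Real.rpow_le_rpow_of_nonpos (by positivity) (by rw [hA_def]; linarith) hq.le
      have hBA : B - A = r ^ 2 - s ^ 2 := by rw [hA_def, hB_def]; ring
      have hBinv : (1:ℝ) / B ≤ 1 / r ^ 2 := by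
        apply one_div_le_one_div_of_le (by positivity)
        rw [hB_def]; linarith
      have hsp2pos : 0 ≤ s ^ (p - 2) := (Real.rpow_pos_of_pos hs' _).le
      have hy : B - A ≤ d * (2 * r) := by rw [hBA]; linarith
      have step : (B - A) * A ^ q / B ≤ (d * (2 * r)) * s ^ (p - 2) / r ^ 2 := by
        have hz : (B - A) * A ^ q ≤ (d * (2 * r)) * s ^ (p - 2) :=
          mul_le_mul hy hAqle (Real.rpow_pos_of_pos hA q).le (by positivity)
        exact div_le_div₀ (by positivity) hz (by positivity) (by rw [hB_def]; linarith)
      have step2 : (d * (2 * r)) * s ^ (p - 2) / r ^ 2 = 2 * d * (s ^ (p - 2) / r) := by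
        field_simp
      have step3 : s ^ 2 * (2 * d * (s ^ (p - 2) / r)) ≤ 2 * d ^ p := by
        have h4 : s ^ (p - 2) / r ≤ s ^ (p - 2) / s :=
          div_le_div_of_nonneg_left hsp2pos hs' hsr
        have h5 : s ^ 2 * (s ^ (p - 2) / s) = s * s ^ (p - 2) := by
          field_simp
        have h6 : s * s ^ (p - 2) = s ^ (p - 1) := by
          rw [mul_comm, ← Real.rpow_add_one hs'.ne']; ring_nf
        have h7 : s ^ 2 * (2 * d * (s ^ (p - 2) / r)) ≤ s ^ 2 * (2 * d * (s ^ (p - 2) / s)) := by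
          apply mul_le_mul_of_nonneg_left _ (by positivity)
          exact mul_le_mul_of_nonneg_left h4 (by positivity)
        have h8 : s ^ 2 * (2 * d * (s ^ (p - 2) / s)) = 2 * d * s ^ (p - 1) := by
          rw [← h6, ← h5]; ring
        have h9 : 2 * d * s ^ (p - 1) ≤ 2 * d * d ^ (p - 1) := by
          apply mul_le_mul_of_nonneg_left hsd1 (by positivity)
        have h10 : 2 * d * d ^ (p - 1) = 2 * d ^ p := by rw [← hdd]; ring
        linarith
      calc s ^ 2 * (A ^ q - B ^ q) ≤ s ^ 2 * ((B - A) * A ^ q / B) := by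
            apply mul_le_mul_of_nonneg_left htrick (by positivity)
        _ ≤ s ^ 2 * ((d * (2 * r)) * s ^ (p - 2) / r ^ 2) := by
            apply mul_le_mul_of_nonneg_left step (by positivity)
        _ = s ^ 2 * (2 * d * (s ^ (p - 2) / r)) := by rw [step2]
        _ ≤ 2 * d ^ p := step3
    -- combine
    have hT0' : 0 ≤ r ^ p - s ^ p := by linarith
    have decomp : (r ^ p - r ^ 2 * B ^ q) - (s ^ p - s ^ 2 * A ^ q)
        = (r ^ p - s ^ p) - (r ^ 2 - s ^ 2) * B ^ q + s ^ 2 * (A ^ q - B ^ q) := by ring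
    rw [abs_le]
    constructor <;> [skip; skip] <;> rw [decomp] <;> linarith

/-- p_c-Hölder continuity of `|𝒜₂(a;·)|`, where
`𝒜₂(a;z) = (|z|^(p−2) − (a + |z|²)^((p−2)/2)) z²` (used in the proof of Proposition 5.1):
for `p ∈ (0,1)` there is `C > 0` such that for all `a > 0` and `z w : ℂ`,
`| |𝒜₂(a;z)| − |𝒜₂(a;w)| | ≤ C |z − w|^p`. -/
theorem abs_A2_holder (p : ℝ) (hp0 : 0 < p) (hp1 : p < 1) :
    ∃ C : ℝ, 0 < C ∧ ∀ a : ℝ, 0 < a → ∀ z w : ℂ,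
      |‖(((‖z‖ ^ (p - 2)
              - (a + ‖z‖ ^ 2) ^ ((p - 2) / 2)) : ℝ) : ℂ) * z ^ 2‖
        - ‖(((‖w‖ ^ (p - 2)
              - (a + ‖w‖ ^ 2) ^ ((p - 2) / 2)) : ℝ) : ℂ) * w ^ 2‖|
        ≤ C * ‖z - w‖ ^ p := by
  refine ⟨5, by norm_num, fun a ha z w => ?_⟩
  have hq : (p - 2) / 2 < 0 := by linarith
  -- rewrite each modulus as ψ(|z|)
  have conv : ∀ v : ℂ, ‖(((‖v‖ ^ (p - 2)
        - (a + ‖v‖ ^ 2) ^ ((p - 2) / 2)) : ℝ) : ℂ) * v ^ 2‖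
      = ‖v‖ ^ p
        - ‖v‖ ^ 2 * (a + ‖v‖ ^ 2) ^ ((p - 2) / 2) := by
    intro v
    rw [norm_mul, Complex.norm_real, Real.norm_eq_abs, norm_pow]
    rcases eq_or_ne v 0 with rfl | hv
    · simp [Real.zero_rpow hp0.ne']
    have ht : 0 < ‖v‖ := norm_pos_iff.mpr hv
    set t : ℝ := ‖v‖ with ht_def
    have h1 : (a + t ^ 2) ^ ((p - 2) / 2) ≤ (t ^ 2) ^ ((p - 2) / 2) :=
      Real.rpow_le_rpow_of_nonpos (by positivity) (by linarith) hq.le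
    have h2 : (t ^ 2) ^ ((p - 2) / 2) = t ^ (p - 2) := by
      rw [← Real.rpow_natCast t 2, ← Real.rpow_mul ht.le]
      congr 1; push_cast; ring
    have hnn : 0 ≤ t ^ (p - 2) - (a + t ^ 2) ^ ((p - 2) / 2) := by
      rw [← h2]; linarith
    rw [abs_of_nonneg hnn, sub_mul]
    have h3 : t ^ (p - 2) * t ^ 2 = t ^ p := by
      rw [← Real.rpow_natCast t 2, ← Real.rpow_add ht]; norm_num
    rw [h3]
    ring
  rw [conv z, conv w]
  -- reduce to the real lemma
  have habs : |‖z‖ - ‖w‖| ≤ ‖z - w‖ :=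
    abs_norm_sub_norm_le z w
  have hmono : ∀ x y : ℝ, 0 ≤ x → x ≤ y → x ^ p ≤ y ^ p :=
    fun x y hx hxy => Real.rpow_le_rpow hx hxy hp0.le
  rcases le_total (‖w‖) (‖z‖) with h | h
  · have := my_key p a hp0 hp1 ha (‖w‖) (‖z‖) (norm_nonneg w) h
    have h2 : (‖z‖ - ‖w‖) ^ p ≤ ‖z - w‖ ^ p := by
      apply hmono _ _ (by linarith)
      calc ‖z‖ - ‖w‖ ≤ |‖z‖ - ‖w‖| := le_abs_self _
        _ ≤ ‖z - w‖ := habs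
    linarith
  · have := my_key p a hp0 hp1 ha (‖z‖) (‖w‖) (norm_nonneg z) h
    have h2 : (‖w‖ - ‖z‖) ^ p ≤ ‖z - w‖ ^ p := by
      apply hmono _ _ (by linarith)
      calc ‖w‖ - ‖z‖ ≤ |‖w‖ - ‖z‖| := le_abs_self _
        _ = |‖z‖ - ‖w‖| := abs_sub_comm _ _
        _ ≤ ‖z - w‖ := habs
    rw [abs_sub_comm]
    linarith
end
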